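/- Fix an agent i, items ℓ ≤ h ≤ r in M = {1,…,m}, a positive integer g, and positive integers n^L, n^R. For a profile u of monotone utility functions, define T_h(u) := { t ∈ {1,…,g} : (1/n^L)·u_i^{−(g+t)}([ℓ,h]) ≥ (1/n^R)·u_i^{−(g−t)}([h+1,r]) } and f_h(u) := max T_h(u) if T_h(u) ≠ ∅ and f_h(u) := 0 otherwise (where [a,b] denotes {a, a+1, …, b} and [h+1,r] = ∅ if h = r). Then for every pair of (agent × item)-level adjacent profiles u, ũ of monotone utility functions, |f_h(u) − f_h(ũ)| ≤ 1. -/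
import Mathlib


noncomputable def kRemoved {m : ℕ} (u : Finset (Fin m) → ℝ) (k : ℕ)
    (S : Finset (Fin m)) : ℝ :=
  ((Finset.univ : Finset (Fin m)).powerset.filter fun T => T.card ≤ k).inf'
    ⟨∅, by simp⟩ fun T => u (S \ T)

def MonotoneProfile {n m : ℕ} (u : Fin n → Finset (Fin m) → ℝ) : Prop :=
  ∀ i : Fin n, (∀ S : Finset (Fin m), 0 ≤ u i S) ∧
    ∀ S T : Finset (Fin m), S ⊆ T → u i S ≤ u i T

def ItemAdjFn {n m : ℕ} (u u' : Fin n → Finset (Fin m) → ℝ) : Prop :=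
  ∃ (iStar : Fin n) (jStar : Fin m),
    (∀ i : Fin n, i ≠ iStar → u i = u' i) ∧
    ∀ S : Finset (Fin m), jStar ∉ S → u iStar S = u' iStar S

/-- The moving-knife quality function `f_h(u)`: the largest `t ∈ [g]` such that
`(1/n^L)·u_i^{−(g+t)}([ℓ,h]) ≥ (1/n^R)·u_i^{−(g−t)}([h+1,r])`, or `0` if no such `t`
exists.  (In `ℕ`, `sSup ∅ = 0`.) -/
noncomputable def fKnife {n m : ℕ} (i : Fin n) (l h r : Fin m) (g nL nR : ℕ)
    (u : Fin n → Finset (Fin m) → ℝ) : ℕ :=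
  sSup {t : ℕ | 1 ≤ t ∧ t ≤ g ∧
    (1 / (nL : ℝ)) * kRemoved (u i) (g + t) (Finset.Icc l h) ≥
      (1 / (nR : ℝ)) * kRemoved (u i) (g - t) (Finset.Ioc h r)}

lemma kRemoved_succ_le {m : ℕ} (v w : Finset (Fin m) → ℝ) (j : Fin m)
    (hvw : ∀ S, j ∉ S → v S = w S)
    (hmw : ∀ S T, S ⊆ T → w S ≤ w T)
    (k : ℕ) (S : Finset (Fin m)) :
    kRemoved v (k+1) S ≤ kRemoved w k S := by
  unfold kRemoved
  apply Finset.le_inf'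
  intro T hT
  simp only [Finset.mem_filter, Finset.mem_powerset] at hT
  have hmem : insert j T ∈ (Finset.univ : Finset (Fin m)).powerset.filter
      fun T => T.card ≤ k + 1 := by
    simp only [Finset.mem_filter, Finset.mem_powerset]
    exact ⟨Finset.subset_univ _, le_trans (Finset.card_insert_le _ _) (by omega)⟩
  refine le_trans (Finset.inf'_le _ hmem) ?_
  have hset : S \ insert j T = (S \ T) \ {j} := by
    ext x; simp [Finset.mem_sdiff, Finset.mem_insert]; tauto
  rw [hset, hvw _ (by simp)]
  exact hmw _ _ (Finset.sdiff_subset)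

lemma step_mem {m : ℕ} (v w : Finset (Fin m) → ℝ) (j : Fin m)
    (hvw : ∀ S, j ∉ S → v S = w S)
    (hmv : ∀ S T, S ⊆ T → v S ≤ v T) (hmw : ∀ S T, S ⊆ T → w S ≤ w T)
    (l h r : Fin m) (g nL nR : ℕ) (t : ℕ) (h2 : 2 ≤ t) (htg : t ≤ g)
    (hcond : (1 / (nL : ℝ)) * kRemoved v (g + t) (Finset.Icc l h) ≥
      (1 / (nR : ℝ)) * kRemoved v (g - t) (Finset.Ioc h r)) :
    (1 / (nL : ℝ)) * kRemoved w (g + (t - 1)) (Finset.Icc l h) ≥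
      (1 / (nR : ℝ)) * kRemoved w (g - (t - 1)) (Finset.Ioc h r) := by
  have hwv : ∀ S, j ∉ S → w S = v S := fun S hS => (hvw S hS).symm
  have e1 : g + t = (g + (t - 1)) + 1 := by omega
  have e2 : g - (t - 1) = (g - t) + 1 := by omega
  have hL : kRemoved v (g + t) (Finset.Icc l h) ≤
      kRemoved w (g + (t - 1)) (Finset.Icc l h) := by
    rw [e1]; exact kRemoved_succ_le v w j hvw hmw _ _
  have hR : kRemoved w (g - (t - 1)) (Finset.Ioc h r) ≤
      kRemoved v (g - t) (Finset.Ioc h r) := by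
    rw [e2]; exact kRemoved_succ_le w v j hwv hmv _ _
  have hnL' : (0 : ℝ) ≤ 1 / (nL : ℝ) := by positivity
  have hnR' : (0 : ℝ) ≤ 1 / (nR : ℝ) := by positivity
  calc (1 / (nR : ℝ)) * kRemoved w (g - (t - 1)) (Finset.Ioc h r)
      ≤ (1 / (nR : ℝ)) * kRemoved v (g - t) (Finset.Ioc h r) :=
        mul_le_mul_of_nonneg_left hR hnR'
    _ ≤ (1 / (nL : ℝ)) * kRemoved v (g + t) (Finset.Icc l h) := hcond
    _ ≤ (1 / (nL : ℝ)) * kRemoved w (g + (t - 1)) (Finset.Icc l h) :=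
        mul_le_mul_of_nonneg_left hL hnL'

lemma sSup_step (A B : Set ℕ) (g : ℕ) (hA : ∀ t ∈ A, t ≤ g)
    (hstep : ∀ t ∈ A, 2 ≤ t → t - 1 ∈ B) (hBbdd : BddAbove B) :
    sSup A ≤ sSup B + 1 := by
  rcases A.eq_empty_or_nonempty with hE | hNe
  · simp [hE]
  · have hmem : sSup A ∈ A := Nat.sSup_mem hNe ⟨g, fun x hx => hA x hx⟩
    by_cases h2 : 2 ≤ sSup A
    · have := le_csSup hBbdd (hstep _ hmem h2)
      omega
    · omega

theorem fKnife_sensitivity (n m : ℕ) (i : Fin n) (l h r : Fin m)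
    (hlh : l ≤ h) (hhr : h ≤ r) (g : ℕ) (hg : 1 ≤ g)
    (nL nR : ℕ) (hnL : 1 ≤ nL) (hnR : 1 ≤ nR)
    (u utilde : Fin n → Finset (Fin m) → ℝ)
    (hu : MonotoneProfile u) (hut : MonotoneProfile utilde)
    (hadj : ItemAdjFn u utilde) :
    |(fKnife i l h r g nL nR u : ℤ) - (fKnife i l h r g nL nR utilde : ℤ)| ≤ 1 := by
  obtain ⟨iStar, jStar, hne, hagree⟩ := hadj
  by_cases hi : i = iStar
  · subst hi
    set A : Set ℕ := {t : ℕ | 1 ≤ t ∧ t ≤ g ∧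
      (1 / (nL : ℝ)) * kRemoved (u i) (g + t) (Finset.Icc l h) ≥
        (1 / (nR : ℝ)) * kRemoved (u i) (g - t) (Finset.Ioc h r)} with hAdef
    set B : Set ℕ := {t : ℕ | 1 ≤ t ∧ t ≤ g ∧
      (1 / (nL : ℝ)) * kRemoved (utilde i) (g + t) (Finset.Icc l h) ≥
        (1 / (nR : ℝ)) * kRemoved (utilde i) (g - t) (Finset.Ioc h r)} with hBdef
    have hfA : fKnife i l h r g nL nR u = sSup A := rfl
    have hfB : fKnife i l h r g nL nR utilde = sSup B := rfl
    have hAbdd : BddAbove A := ⟨g, fun x hx => hx.2.1⟩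
    have hBbdd : BddAbove B := ⟨g, fun x hx => hx.2.1⟩
    have h1 : sSup A ≤ sSup B + 1 := by
      refine sSup_step A B g (fun t ht => ht.2.1) ?_ hBbdd
      intro t ht h2
      obtain ⟨ht1, htg, hc⟩ := ht
      exact ⟨by omega, by omega,
        step_mem (u i) (utilde i) jStar hagree (hu i).2 (hut i).2
          l h r g nL nR t h2 htg hc⟩
    have h2 : sSup B ≤ sSup A + 1 := by
      refine sSup_step B A g (fun t ht => ht.2.1) ?_ hAbdd
      intro t ht h2
      obtain ⟨ht1, htg, hc⟩ := ht
      exact ⟨by omega, by omega,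
        step_mem (utilde i) (u i) jStar (fun S hS => (hagree S hS).symm)
          (hut i).2 (hu i).2 l h r g nL nR t h2 htg hc⟩
    rw [hfA, hfB, abs_le]
    constructor <;> push_cast <;> omega
  · have heq : fKnife i l h r g nL nR u = fKnife i l h r g nL nR utilde := by
      unfold fKnife
      rw [hne i hi]
    rw [heq]
    simp
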